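/- arXiv:1312.0271 — 4 statements merged into one kernel-verified Lean document; each statement's English description precedes it below -/
import Mathlib

section
/- Let Y be a geodesic metric space and f : X → Y a homeomorphism from a metric space X onto Y. Then for every x ∈ X and every r with 0 < r ≤ diam(X), one has inf_{d(x,y) ≥ r} d(f(x), f(y)) ≥ inf_{d(x,y) = r} d(f(x), f(y)). -/
/-- If `Y` is a geodesic metric space and `f : X → Y` is a homeomorphism, then for every
`x ∈ X` and `0 < r ≤ diam X`, the infimum of `d(f x, f y)` over `{y | d(x,y) ≥ r}` is at
least the infimum over the sphere `{y | d(x,y) = r}`. -/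
theorem inf_sphere_le_inf_complement
    {X Y : Type*} [MetricSpace X] [MetricSpace Y]
    (hgeo : ∀ p q : Y, ∃ γ : ℝ → Y, γ 0 = p ∧ γ (dist p q) = q ∧
      ∀ s ∈ Set.Icc (0 : ℝ) (dist p q), ∀ t ∈ Set.Icc (0 : ℝ) (dist p q),
        dist (γ s) (γ t) = |s - t|)
    (f : X ≃ₜ Y) (x : X) (r : ℝ) (hr : 0 < r)
    (hrdiam : ENNReal.ofReal r ≤ EMetric.diam (Set.univ : Set X)) :
    (⨅ y ∈ {y : X | dist x y = r}, edist (f x) (f y)) ≤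
      ⨅ y ∈ {y : X | r ≤ dist x y}, edist (f x) (f y) := by
  refine le_iInf₂ fun y hy => ?_
  simp only [Set.mem_setOf_eq] at hy
  obtain ⟨γ, hγ0, hγD, hγiso⟩ := hgeo (f y) (f x)
  set D := dist (f y) (f x) with hDdef
  have hD : (0 : ℝ) ≤ D := dist_nonneg
  -- γ is Lipschitz on Icc 0 D, hence continuous there
  have hγcont : ContinuousOn γ (Set.Icc 0 D) := by
    apply LipschitzOnWith.continuousOn (K := 1)
    intro s hs t ht
    rw [edist_dist, edist_dist, hγiso s hs t ht, Real.dist_eq]; simp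
  set g : ℝ → ℝ := fun t => dist x (f.symm (γ t)) with hgdef
  have hgcont : ContinuousOn g (Set.Icc 0 D) :=
    (continuous_const.dist (f.symm.continuous)).comp_continuousOn hγcont
  have hg0 : g 0 = dist x y := by simp [hgdef, hγ0]
  have hgD : g D = 0 := by simp [hgdef, hγD]
  have hmem : r ∈ Set.Icc (g D) (g 0) := by
    rw [hg0, hgD]; exact ⟨hr.le, hy⟩
  obtain ⟨t, ht, hgt⟩ := intermediate_value_Icc' hD hgcont hmem
  set z := f.symm (γ t) with hz
  have hzsphere : dist x z = r := hgt
  have hfz : f z = γ t := f.apply_symm_apply (γ t)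
  have hdist : dist (f x) (f z) ≤ dist (f x) (f y) := by
    have h1 : dist (γ t) (γ D) = |t - D| :=
      hγiso t ht D ⟨hD, le_refl D⟩
    have h2 : |t - D| ≤ D := by
      rw [abs_sub_comm, abs_of_nonneg (by linarith [ht.2])]
      linarith [ht.1]
    calc dist (f x) (f z) = dist (γ t) (γ D) := by rw [hfz, hγD, dist_comm]
      _ ≤ D := h1 ▸ h2
      _ = dist (f x) (f y) := dist_comm (f y) (f x)
  calc (⨅ w ∈ {w : X | dist x w = r}, edist (f x) (f w))
      ≤ edist (f x) (f z) := biInf_le _ hzsphere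
    _ ≤ edist (f x) (f y) := by
        rw [edist_dist, edist_dist]
        exact ENNReal.ofReal_le_ofReal hdist
end

section
/- Let M and N be metric spaces, f : M → N a map, x ∈ M, and suppose f⁻¹({f(x)}) = {x, x₁, ..., x_N} is finite. Suppose there is C ≥ 1 such that for all ρ > 0 the preimage f⁻¹(B(f(x), ρ)) contains B(x, ρ/C) ∪ ⋃ᵢ B(xᵢ, ρ/C) and is contained in B(x, Cρ) ∪ ⋃ᵢ B(xᵢ, Cρ). If ρ₁ > 0 is such that the balls B(x, 2Cρ) and B(xᵢ, 2Cρ) are pairwise disjoint for ρ < ρ₁, then for every y ∈ M with 0 < d(x,y) < 2Cρ₁ one has d(f(x), f(y)) > d(x,y)/(2C). -/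
/-- Quantitative lower bound for maps with finite fibers satisfying ball-sandwiching
inclusions: if `f⁻¹{f x} = {x, x₁, …, x_N}`, the preimage of `B(f x, ρ)` is sandwiched
between the unions of balls of radii `ρ/C` and `Cρ` around the fiber, and the balls of
radius `2Cρ` around the fiber points are pairwise disjoint for `ρ < ρ₁`, then
`d(f x, f y) > d(x,y)/(2C)` for all `y` with `0 < d(x,y) < 2Cρ₁`. -/
theorem dist_image_lower_bound {M N : Type*} [MetricSpace M] [MetricSpace N]
    (f : M → N) (x : M) (Nn : ℕ) (xs : Fin Nn → M)
    (hfiber : f ⁻¹' {f x} = insert x (Set.range xs))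
    (C : ℝ) (hC : 1 ≤ C)
    (hlow : ∀ ρ > 0, Metric.ball x (ρ / C) ∪ (⋃ i, Metric.ball (xs i) (ρ / C)) ⊆
      f ⁻¹' Metric.ball (f x) ρ)
    (hup : ∀ ρ > 0, f ⁻¹' Metric.ball (f x) ρ ⊆
      Metric.ball x (C * ρ) ∪ ⋃ i, Metric.ball (xs i) (C * ρ))
    (ρ₁ : ℝ) (hρ₁ : 0 < ρ₁)
    (hdisj : ∀ ρ, 0 < ρ → ρ < ρ₁ →
      (∀ i, Disjoint (Metric.ball x (2 * C * ρ)) (Metric.ball (xs i) (2 * C * ρ))) ∧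
      ∀ i j, i ≠ j →
        Disjoint (Metric.ball (xs i) (2 * C * ρ)) (Metric.ball (xs j) (2 * C * ρ)))
    (y : M) (hy0 : 0 < dist x y) (hy1 : dist x y < 2 * C * ρ₁) :
    dist x y / (2 * C) < dist (f x) (f y) := by
  by_contra h
  push_neg at h
  set d := dist x y with hd
  have hCpos : (0:ℝ) < C := lt_of_lt_of_le one_pos hC
  have h2C : (0:ℝ) < 2 * C := by positivity
  set ρ := d / (2 * C) with hρ
  have hρpos : 0 < ρ := div_pos hy0 h2C
  have hρρ₁ : ρ < ρ₁ := by rw [hρ, div_lt_iff₀ h2C]; linarith [hy1]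
  have hρd : ρ < d / C := by
    rw [hρ, div_lt_div_iff₀ h2C hCpos]; nlinarith
  obtain ⟨ρ', hρ'1, hρ'2⟩ := exists_between (lt_min hρρ₁ hρd)
  have hρ'ρ₁ : ρ' < ρ₁ := lt_of_lt_of_le hρ'2 (min_le_left _ _)
  have hρ'd : ρ' < d / C := lt_of_lt_of_le hρ'2 (min_le_right _ _)
  have hρ'pos : 0 < ρ' := hρpos.trans hρ'1
  have hy : y ∈ f ⁻¹' Metric.ball (f x) ρ' := by
    simp only [Set.mem_preimage, Metric.mem_ball]
    calc dist (f y) (f x) = dist (f x) (f y) := dist_comm _ _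
      _ ≤ ρ := h
      _ < ρ' := hρ'1
  rcases hup ρ' hρ'pos hy with hy' | hy'
  · rw [Metric.mem_ball, dist_comm] at hy'
    have : C * ρ' < d := by rw [← lt_div_iff₀' hCpos]; exact hρ'd
    linarith
  · obtain ⟨i, hi⟩ := Set.mem_iUnion.mp hy'
    have h1 := (hdisj ρ' hρ'pos hρ'ρ₁).1 i
    have hyx : y ∈ Metric.ball x (2 * C * ρ') := by
      rw [Metric.mem_ball, dist_comm]
      calc d = 2 * C * ρ := by rw [hρ]; field_simp
        _ < 2 * C * ρ' := by nlinarith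
    have hyi : y ∈ Metric.ball (xs i) (2 * C * ρ') := by
      rw [Metric.mem_ball] at hi ⊢; nlinarith
    exact Set.disjoint_left.mp h1 hyx hyi
end

section
/- For the multi-twist map F_a(z₁, ..., z_{n+1}) = (|z₁|·e^{i·a·arg z₁}, ..., |z_{n+1}|·e^{i·a·arg z_{n+1}}) with a a positive integer, at every point p of the sphere S^{2n+1} ⊂ ℂ^{n+1} where all coordinates are nonzero, the differential satisfies ‖v‖ ≤ ‖(F_a)_* v‖ ≤ a·‖v‖ for every tangent vector v, where ‖·‖ is the Euclidean norm on ℂ^{n+1}. In particular in polar coordinates z_j = r_j e^{iθ_j}, one computes ‖(F_a)_* v‖² = Σⱼ ((cos θⱼ v_{xⱼ} + sin θⱼ v_{yⱼ})² + a²(sin θⱼ v_{xⱼ} - cos θⱼ v_{yⱼ})²). -/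
open Complex


noncomputable def absDeriv (z : ℂ) : ℂ →L[ℝ] ℝ :=
  (‖z‖)⁻¹ • (z.re • Complex.reCLM + z.im • Complex.imCLM)

theorem hasFDerivAt_abs' {z : ℂ} (hz : z ≠ 0) :
    HasFDerivAt (fun w : ℂ => ‖w‖) (absDeriv z) z := by
  have h1 := Complex.reCLM.hasFDerivAt (x := z)
  have h2 := Complex.imCLM.hasFDerivAt (x := z)
  have hq : HasFDerivAt (fun w : ℂ => w.re * w.re + w.im * w.im)
      ((z.re • Complex.reCLM + z.re • Complex.reCLM) +
        (z.im • Complex.imCLM + z.im • Complex.imCLM)) z := (h1.mul h1).add (h2.mul h2)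
  have hq0 : z.re * z.re + z.im * z.im ≠ 0 := by
    have := Complex.normSq_pos.mpr hz
    rw [Complex.normSq_apply] at this
    nlinarith
  have hs := (Real.hasDerivAt_sqrt hq0).comp_hasFDerivAt z hq
  have habs : (fun w : ℂ => ‖w‖) = fun w : ℂ => Real.sqrt (w.re * w.re + w.im * w.im) := by
    funext w
    rw [Complex.norm_def, Complex.normSq_apply]
  rw [habs]
  refine hs.congr_fderiv ?_
  have hsq : Real.sqrt (z.re * z.re + z.im * z.im) = ‖z‖ := by
    rw [Complex.norm_def, Complex.normSq_apply]
  have ha0 : ‖z‖ ≠ 0 := norm_ne_zero_iff.mpr hz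
  ext v
  · simp [absDeriv, hsq]; ring

noncomputable def sDeriv (k : ℕ) (z : ℂ) : ℂ →L[ℝ] ℂ :=
  (‖z‖ ^ k)⁻¹ •
      ((ContinuousLinearMap.smulRight (1 : ℂ →L[ℂ] ℂ)
        (((k : ℂ) + 1) * z ^ k)).restrictScalars ℝ) +
    ((-((k : ℝ) * ‖z‖ ^ (k - 1)) / (‖z‖ ^ k) ^ 2) • absDeriv z).smulRight
      (z ^ (k + 1))

theorem hasFDerivAt_sDeriv (k : ℕ) {z : ℂ} (hz : z ≠ 0) :
    HasFDerivAt (fun w : ℂ => ((‖w‖ ^ k)⁻¹ : ℝ) • w ^ (k + 1)) (sDeriv k z) z := by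
  have ha0 : ‖z‖ ≠ 0 := norm_ne_zero_iff.mpr hz
  have hr : HasFDerivAt (fun w : ℂ => (‖w‖ ^ k)⁻¹)
      ((-((k : ℝ) * ‖z‖ ^ (k - 1)) / (‖z‖ ^ k) ^ 2) • absDeriv z) z := by
    have h1 : HasDerivAt (fun t : ℝ => (t ^ k)⁻¹)
        (-((k : ℝ) * ‖z‖ ^ (k - 1)) / (‖z‖ ^ k) ^ 2) (‖z‖) := by
      simpa [Pi.inv_def] using (hasDerivAt_pow k (‖z‖)).inv (pow_ne_zero k ha0)
    exact h1.comp_hasFDerivAt z (hasFDerivAt_abs' hz)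
  have hg : HasFDerivAt (fun w : ℂ => w ^ (k + 1))
      ((ContinuousLinearMap.smulRight (1 : ℂ →L[ℂ] ℂ)
        (((k : ℂ) + 1) * z ^ k)).restrictScalars ℝ) z := by
    have := ((hasDerivAt_pow (k + 1) z).hasFDerivAt).restrictScalars ℝ
    simpa [ContinuousLinearMap.smulRight_one_eq_toSpanSingleton] using this
  exact hr.smul hg

theorem sDeriv_apply' (k : ℕ) (z v : ℂ) :
    sDeriv k z v = z ^ k * ((((‖z‖ ^ k)⁻¹ * ((k : ℝ) + 1) : ℝ) : ℂ) * v +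
      (((-((k : ℝ) * ‖z‖ ^ (k - 1)) / (‖z‖ ^ k) ^ 2 *
        ((‖z‖)⁻¹ * (z.re * v.re + z.im * v.im))) : ℝ) : ℂ) * z) := by
  simp only [sDeriv, absDeriv, ContinuousLinearMap.add_apply, ContinuousLinearMap.smul_apply,
    ContinuousLinearMap.smulRight_apply, ContinuousLinearMap.coe_restrictScalars',
    ContinuousLinearMap.one_apply, Complex.reCLM_apply, Complex.imCLM_apply,
    Complex.real_smul, smul_eq_mul]
  push_cast
  ring

theorem sDeriv_val (k : ℕ) {z : ℂ} (hz : z ≠ 0) (v : ℂ) :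
    sDeriv k z v = z ^ (k + 1) * (((‖z‖ ^ (k + 1))⁻¹ : ℝ) : ℂ) *
      (((z.re * v.re + z.im * v.im) / ‖z‖ : ℝ) +
        ((k : ℝ) + 1) * ((z.re * v.im - z.im * v.re) / ‖z‖ : ℝ) * I) := by
  have ha0 : ‖z‖ ≠ 0 := norm_ne_zero_iff.mpr hz
  have hP : (‖z‖ : ℝ) ^ k ≠ 0 := pow_ne_zero _ ha0
  have hA : -((k : ℝ) * ‖z‖ ^ (k - 1)) / (‖z‖ ^ k) ^ 2 *
      (‖z‖)⁻¹ = -(k : ℝ) / (‖z‖ ^ k * ‖z‖ ^ 2) := by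
    cases k with
    | zero => simp
    | succ m =>
      have h : (m + 1 : ℕ) - 1 = m := rfl
      rw [h]
      field_simp
      ring
  rw [sDeriv_apply']
  rw [show ((-((k : ℝ) * ‖z‖ ^ (k - 1)) / (‖z‖ ^ k) ^ 2 *
        ((‖z‖)⁻¹ * (z.re * v.re + z.im * v.im))) : ℝ) =
      (-((k : ℝ) * ‖z‖ ^ (k - 1)) / (‖z‖ ^ k) ^ 2 * (‖z‖)⁻¹) *
        (z.re * v.re + z.im * v.im) from by ring, hA]
  have hxy : z.re ^ 2 + z.im ^ 2 = ‖z‖ ^ 2 := by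
    rw [Complex.sq_norm, Complex.normSq_apply]; ring
  rw [pow_succ z k, mul_assoc, mul_assoc]
  congr 1
  apply Complex.ext
  · simp only [Complex.add_re, Complex.add_im, Complex.mul_re, Complex.mul_im,
      Complex.ofReal_re, Complex.ofReal_im, Complex.I_re, Complex.I_im, Complex.one_re, Complex.one_im]
    field_simp
    linear_combination (-((k : ℝ) + 1) * v.re * ‖z‖ * ‖z‖ ^ k) * hxy
  · simp only [Complex.add_re, Complex.add_im, Complex.mul_re, Complex.mul_im,
      Complex.ofReal_re, Complex.ofReal_im, Complex.I_re, Complex.I_im, Complex.one_re, Complex.one_im]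
    field_simp
    linear_combination (-((k : ℝ) + 1) * v.im * ‖z‖ * ‖z‖ ^ k) * hxy

theorem sDeriv_norm_sq (k : ℕ) {z : ℂ} (hz : z ≠ 0) (v : ℂ) :
    ‖sDeriv k z v‖ ^ 2 =
      (Real.cos (Complex.arg z) * v.re + Real.sin (Complex.arg z) * v.im) ^ 2 +
        ((k : ℝ) + 1) ^ 2 *
          (Real.sin (Complex.arg z) * v.re - Real.cos (Complex.arg z) * v.im) ^ 2 := by
  have ha0 : ‖z‖ ≠ 0 := norm_ne_zero_iff.mpr hz
  have hcos : Real.cos (Complex.arg z) = z.re / ‖z‖ := Complex.cos_arg hz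
  have hsin : Real.sin (Complex.arg z) = z.im / ‖z‖ := Complex.sin_arg z
  rw [sDeriv_val k hz v, norm_mul, norm_mul]
  rw [Complex.norm_real, norm_pow, Real.norm_of_nonneg (inv_nonneg.mpr (by positivity))]
  have h1 : ‖z‖ ^ (k + 1) * (‖z‖ ^ (k + 1))⁻¹ = 1 := by
    field_simp
  have h2 : ‖(((z.re * v.re + z.im * v.im) / ‖z‖ : ℝ) : ℂ) +
      ((k : ℝ) + 1) * (((z.re * v.im - z.im * v.re) / ‖z‖ : ℝ) : ℂ) * I‖ ^ 2 =
      ((z.re * v.re + z.im * v.im) / ‖z‖) ^ 2 +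
        ((k : ℝ) + 1) ^ 2 * ((z.re * v.im - z.im * v.re) / ‖z‖) ^ 2 := by
    rw [Complex.sq_norm, Complex.normSq_apply]
    simp only [Complex.add_re, Complex.add_im, Complex.mul_re, Complex.mul_im,
      Complex.ofReal_re, Complex.ofReal_im, Complex.I_re, Complex.I_im,
      Complex.one_re, Complex.one_im, Complex.natCast_re, Complex.natCast_im]
    push_cast
    ring
  rw [mul_pow, mul_pow, h2, hcos, hsin]
  rw [show (‖z‖ ^ (k + 1)) ^ 2 * ((‖z‖ ^ (k + 1))⁻¹) ^ 2 = 1 from by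
    rw [← mul_pow, h1, one_pow]]
  field_simp
  ring


/-- The multi-twist map `F_a : ℂ^{n+1} → ℂ^{n+1}`,
`F_a(z)ⱼ = |zⱼ| e^{i a arg zⱼ}` (with value `0` when `zⱼ = 0`). -/
noncomputable def multiTwist (n a : ℕ) (z : EuclideanSpace ℂ (Fin (n + 1))) :
    EuclideanSpace ℂ (Fin (n + 1)) :=
  WithLp.toLp 2 (fun j => ((‖z j‖ : ℝ) : ℂ) * Complex.exp (Complex.I * (a : ℂ) * (Complex.arg (z j) : ℂ)))

/-- At every point `p` of the unit sphere `S^{2n+1} ⊂ ℂ^{n+1}` with all coordinates nonzero,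
the multi-twist map `F_a` is differentiable, its differential satisfies
`‖v‖ ≤ ‖(F_a)_* v‖ ≤ a ‖v‖` for every tangent vector `v`, and in polar coordinates one has
`‖(F_a)_* v‖² = Σⱼ ((cos θⱼ v_{xⱼ} + sin θⱼ v_{yⱼ})² + a² (sin θⱼ v_{xⱼ} - cos θⱼ v_{yⱼ})²)`. -/
theorem multiTwist_differential_bounds (n a : ℕ) (ha : 0 < a)
    (p : EuclideanSpace ℂ (Fin (n + 1))) (hp : ‖p‖ = 1) (hnz : ∀ j, p j ≠ 0) :
    DifferentiableAt ℝ (multiTwist n a) p ∧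
    (∀ v : EuclideanSpace ℂ (Fin (n + 1)),
      (∑ j, (starRingEnd ℂ) (p j) * v j).re = 0 →
      ‖v‖ ≤ ‖fderiv ℝ (multiTwist n a) p v‖ ∧ ‖fderiv ℝ (multiTwist n a) p v‖ ≤ a * ‖v‖) ∧
    (∀ v : EuclideanSpace ℂ (Fin (n + 1)),
      ‖fderiv ℝ (multiTwist n a) p v‖ ^ 2 =
        ∑ j, ((Real.cos (Complex.arg (p j)) * (v j).re
                + Real.sin (Complex.arg (p j)) * (v j).im) ^ 2
              + (a : ℝ) ^ 2 * (Real.sin (Complex.arg (p j)) * (v j).re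
                - Real.cos (Complex.arg (p j)) * (v j).im) ^ 2)) := by
  obtain ⟨k, rfl⟩ : ∃ k, a = k + 1 := ⟨a - 1, (Nat.succ_pred_eq_of_pos ha).symm⟩
  -- the coordinate projections as ℝ-linear maps
  let projR : Fin (n + 1) → (EuclideanSpace ℂ (Fin (n + 1)) →L[ℝ] ℂ) := fun j =>
    (EuclideanSpace.proj j : EuclideanSpace ℂ (Fin (n + 1)) →L[ℂ] ℂ).restrictScalars ℝ
  let L := PiLp.continuousLinearEquiv 2 ℝ (fun _ : Fin (n + 1) => ℂ)
  let DG : EuclideanSpace ℂ (Fin (n + 1)) →L[ℝ] EuclideanSpace ℂ (Fin (n + 1)) :=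
    (L.symm : (Fin (n + 1) → ℂ) →L[ℝ] EuclideanSpace ℂ (Fin (n + 1))).comp
      (ContinuousLinearMap.pi fun j => (sDeriv k (p j)).comp (projR j))
  -- G agrees with multiTwist near p
  let G : EuclideanSpace ℂ (Fin (n + 1)) → EuclideanSpace ℂ (Fin (n + 1)) := fun z => WithLp.toLp 2 (fun j => ((‖z j‖ ^ k)⁻¹ : ℝ) • (z j) ^ (k + 1))
  have hH : HasFDerivAt (fun z : EuclideanSpace ℂ (Fin (n + 1)) => (fun j => ((‖z j‖ ^ k)⁻¹ : ℝ) • (z j) ^ (k + 1)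
      : Fin (n + 1) → ℂ)) (ContinuousLinearMap.pi fun j => (sDeriv k (p j)).comp (projR j)) p := by
    apply hasFDerivAt_pi.2
    intro j
    exact (hasFDerivAt_sDeriv k (hnz j)).comp p ((projR j).hasFDerivAt)
  have hG : HasFDerivAt G DG p :=
    ((L.symm : (Fin (n + 1) → ℂ) →L[ℝ] EuclideanSpace ℂ (Fin (n + 1))).hasFDerivAt).comp p hH
  have heq : multiTwist n (k + 1) =ᶠ[nhds p] G := by
    have hopen : IsOpen {z : EuclideanSpace ℂ (Fin (n + 1)) | ∀ j, z j ≠ 0} := by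
      have : {z : EuclideanSpace ℂ (Fin (n + 1)) | ∀ j, z j ≠ 0} = ⋂ j, (fun z : EuclideanSpace ℂ (Fin (n + 1)) => z j) ⁻¹' {(0 : ℂ)}ᶜ := by
        ext z; simp
      rw [this]
      exact isOpen_iInter_of_finite fun j =>
        (isOpen_compl_singleton).preimage (projR j).continuous
    filter_upwards [hopen.mem_nhds (by simp only [Set.mem_setOf_eq]; exact hnz)] with z hzz
    ext j
    have hw : z j ≠ 0 := hzz j
    have hρ : ‖z j‖ ≠ 0 := norm_ne_zero_iff.mpr hw
    show (‖z j‖ : ℂ) * Complex.exp (Complex.I * ((k + 1 : ℕ) : ℂ) *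
        (Complex.arg (z j) : ℂ)) = ((‖z j‖ ^ k)⁻¹ : ℝ) • (z j) ^ (k + 1)
    have hexp : Complex.exp (Complex.I * ((k + 1 : ℕ) : ℂ) * (Complex.arg (z j) : ℂ)) =
        Complex.exp ((Complex.arg (z j) : ℂ) * Complex.I) ^ (k + 1) := by
      rw [← Complex.exp_nat_mul]
      ring_nf
    have hz1 : (‖z j‖ : ℂ) * Complex.exp ((Complex.arg (z j) : ℂ) * Complex.I) =
        z j := Complex.norm_mul_exp_arg_mul_I (z j)
    have hρC : ((‖z j‖ : ℝ) : ℂ) ≠ 0 := Complex.ofReal_ne_zero.mpr hρ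
    have hexp2 : Complex.exp ((Complex.arg (z j) : ℂ) * Complex.I) =
        z j / (‖z j‖ : ℂ) := by
      rw [eq_div_iff hρC]
      linear_combination hz1
    rw [hexp, hexp2, Complex.real_smul, div_pow]
    push_cast
    field_simp
    ring
  have hdiff : DifferentiableAt ℝ (multiTwist n (k + 1)) p :=
    hG.differentiableAt.congr_of_eventuallyEq heq
  have hfd : fderiv ℝ (multiTwist n (k + 1)) p = DG := by
    rw [heq.fderiv_eq]
    exact hG.fderiv
  have hDGapp : ∀ (v : EuclideanSpace ℂ (Fin (n + 1))) (j : Fin (n + 1)), (DG v) j = sDeriv k (p j) (v j) := by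
    intro v j
    simp [DG, L, projR]
  have hnorm2 : ∀ w : EuclideanSpace ℂ (Fin (n + 1)), ‖w‖ ^ 2 = ∑ j, ‖w j‖ ^ 2 := by
    intro w
    rw [EuclideanSpace.norm_eq, Real.sq_sqrt (by positivity)]
  have hkey : ∀ v : EuclideanSpace ℂ (Fin (n + 1)), ‖DG v‖ ^ 2 = ∑ j,
      ((Real.cos (Complex.arg (p j)) * (v j).re + Real.sin (Complex.arg (p j)) * (v j).im) ^ 2
        + ((k : ℝ) + 1) ^ 2 * (Real.sin (Complex.arg (p j)) * (v j).re
            - Real.cos (Complex.arg (p j)) * (v j).im) ^ 2) := by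
    intro v
    rw [hnorm2]
    refine Finset.sum_congr rfl fun j _ => ?_
    rw [hDGapp v j]
    exact sDeriv_norm_sq k (hnz j) (v j)
  have hvnorm : ∀ v : EuclideanSpace ℂ (Fin (n + 1)), ‖v‖ ^ 2 = ∑ j,
      ((Real.cos (Complex.arg (p j)) * (v j).re + Real.sin (Complex.arg (p j)) * (v j).im) ^ 2
        + (Real.sin (Complex.arg (p j)) * (v j).re
            - Real.cos (Complex.arg (p j)) * (v j).im) ^ 2) := by
    intro v
    rw [hnorm2]
    refine Finset.sum_congr rfl fun j _ => ?_
    have h1 : ‖v j‖ ^ 2 = (v j).re ^ 2 + (v j).im ^ 2 := by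
      rw [Complex.sq_norm, Complex.normSq_apply]; ring
    rw [h1]
    have h2 := Real.sin_sq_add_cos_sq (Complex.arg (p j))
    linear_combination ((v j).re ^ 2 + (v j).im ^ 2) * h2.symm + (0 : ℝ)
  have hk2 : (1 : ℝ) ≤ ((k : ℝ) + 1) ^ 2 := by nlinarith [Nat.cast_nonneg (α := ℝ) k]
  refine ⟨hdiff, ?_, ?_⟩
  · intro v _
    rw [hfd]
    constructor
    · have hsq : ‖v‖ ^ 2 ≤ ‖DG v‖ ^ 2 := by
        rw [hkey, hvnorm]
        refine Finset.sum_le_sum fun j _ => ?_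
        nlinarith [sq_nonneg (Real.sin (Complex.arg (p j)) * (v j).re
          - Real.cos (Complex.arg (p j)) * (v j).im)]
      exact le_of_pow_le_pow_left₀ (by norm_num) (norm_nonneg _) hsq
    · have hsq : ‖DG v‖ ^ 2 ≤ (((k + 1 : ℕ) : ℝ) * ‖v‖) ^ 2 := by
        rw [hkey]
        have : (((k + 1 : ℕ) : ℝ) * ‖v‖) ^ 2 = ((k : ℝ) + 1) ^ 2 * ‖v‖ ^ 2 := by
          push_cast; ring
        rw [this, hvnorm, Finset.mul_sum]
        refine Finset.sum_le_sum fun j _ => ?_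
        nlinarith [sq_nonneg (Real.cos (Complex.arg (p j)) * (v j).re
          + Real.sin (Complex.arg (p j)) * (v j).im)]
      exact le_of_pow_le_pow_left₀ (by norm_num) (by positivity) hsq
  · intro v
    rw [hfd, hkey v]
    refine Finset.sum_congr rfl fun j _ => ?_
    push_cast
    ring
end

section
/- Let f be a bundle map of a finite-dimensional normed vector bundle over a set X (linear isomorphisms f_p : F_p → F_{fp} on fibers over a self-map of the base). If every point p is eventually mapped by the induced base map into a set T on which the fiber maps f_q are isometries (up to scalar) and which is forward-invariant, and each point picks up distortion at most once before entering T, then f is uniform: sup_n sup_p ( sup_{v∈F_p}‖(fⁿ)_p v‖/‖v‖ ) / ( inf_{v∈F_p}‖(fⁿ)_p v‖/‖v‖ ) ≤ sup_p ( sup_v ‖f_p v‖/‖v‖ ) / ( inf_v ‖f_p v‖/‖v‖ ). More precisely: if X = T ∪ J ∪ D where f(T) ⊆ T, f(J) ⊆ T ∪ J, f(D) ⊆ T, and f_p is a similarity (‖f_p v‖ = λ(p)‖v‖ for all v) for p ∈ T ∪ J, while f_p has distortion at most K for p ∈ D, then every iterate fⁿ has distortion at most K at every point. -/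
/-- The (linear) map `A` has distortion at most `K`:
`(‖A u‖/‖u‖) ≤ K (‖A v‖/‖v‖)` for all nonzero `u, v`, written multiplicatively. -/
def DistortionLE {U V : Type*} [NormedAddCommGroup U] [NormedAddCommGroup V]
    (K : ℝ) (A : U → V) : Prop :=
  ∀ u v : U, ‖A u‖ * ‖v‖ ≤ K * (‖A v‖ * ‖u‖)

/-- `A` is a similarity: `‖A v‖ = λ ‖v‖` for some `λ > 0` and all `v`. -/
def IsSimilarityMap {U V : Type*} [NormedAddCommGroup U] [NormedAddCommGroup V]
    (A : U → V) : Prop :=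
  ∃ lam : ℝ, 0 < lam ∧ ∀ v, ‖A v‖ = lam * ‖v‖

/-- Iterates of a bundle map: `(fⁿ)_p = A_{τ^{n-1} p} ∘ ⋯ ∘ A_p : F_p → F_{τⁿ p}`. -/
def iterBundleMap {X : Type*} {F : X → Type*} [∀ p, NormedAddCommGroup (F p)]
    [∀ p, Module ℝ (F p)] (τ : X → X) (A : ∀ p, F p →ₗ[ℝ] F (τ p)) :
    (n : ℕ) → (p : X) → F p →ₗ[ℝ] F (τ^[n] p)
  | 0, _ => LinearMap.id
  | n + 1, p => (iterBundleMap τ A n (τ p)).comp (A p)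

/-- Conformal trap principle for bundle maps: if `X = T ∪ J ∪ D` with `τ(T) ⊆ T`,
`τ(J) ⊆ T ∪ J`, `τ(D) ⊆ T`, the fiber maps are similarities over `T ∪ J` and have
distortion at most `K` over `D`, then every iterate has distortion at most `K` at every
point (the bundle map is uniform). -/
theorem iterate_distortion_le {X : Type*} {F : X → Type*} [∀ p, NormedAddCommGroup (F p)]
    [∀ p, NormedSpace ℝ (F p)] [∀ p, FiniteDimensional ℝ (F p)]
    (τ : X → X) (A : ∀ p, F p ≃ₗ[ℝ] F (τ p))
    (T J D : Set X) (hcover : ∀ p, p ∈ T ∨ p ∈ J ∨ p ∈ D)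
    (hT : ∀ p ∈ T, τ p ∈ T) (hJ : ∀ p ∈ J, τ p ∈ T ∪ J) (hD : ∀ p ∈ D, τ p ∈ T)
    (K : ℝ) (hK : 1 ≤ K)
    (hsim : ∀ p ∈ T ∪ J, IsSimilarityMap (⇑(A p)))
    (hdist : ∀ p ∈ D, DistortionLE K (⇑(A p))) :
    ∀ (n : ℕ) (p : X),
      DistortionLE K (⇑(iterBundleMap τ (fun p => (A p).toLinearMap) n p)) := by
  set B := fun p => (A p).toLinearMap with hB
  -- Over T ∪ J, every iterate is a similarity
  have simIter : ∀ (n : ℕ) (p : X), p ∈ T ∪ J →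
      IsSimilarityMap (⇑(iterBundleMap τ B n p)) := by
    intro n
    induction n with
    | zero => intro p _; exact ⟨1, one_pos, fun v => (one_mul _).symm⟩
    | succ n ih =>
      intro p hp
      obtain ⟨l1, hl1, h1⟩ := hsim p hp
      have hτp : τ p ∈ T ∪ J := by
        rcases hp with hp | hp
        · exact Or.inl (hT p hp)
        · exact hJ p hp
      obtain ⟨l2, hl2, h2⟩ := ih (τ p) hτp
      refine ⟨l2 * l1, mul_pos hl2 hl1, fun v => ?_⟩
      show ‖(iterBundleMap τ B n (τ p)) ((A p) v)‖ = l2 * l1 * ‖v‖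
      rw [h2, h1, mul_assoc]
  intro n p
  rcases hcover p with hp | hp | hp
  · obtain ⟨l, hl, h⟩ := simIter n p (Or.inl hp)
    intro u v
    rw [h, h]
    calc l * ‖u‖ * ‖v‖ ≤ K * (l * ‖u‖ * ‖v‖) := le_mul_of_one_le_left (by positivity) hK
      _ = K * (l * ‖v‖ * ‖u‖) := by ring
  · obtain ⟨l, hl, h⟩ := simIter n p (Or.inr hp)
    intro u v
    rw [h, h]
    calc l * ‖u‖ * ‖v‖ ≤ K * (l * ‖u‖ * ‖v‖) := le_mul_of_one_le_left (by positivity) hK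
      _ = K * (l * ‖v‖ * ‖u‖) := by ring
  · cases n with
    | zero =>
      intro u v
      show ‖u‖ * ‖v‖ ≤ K * (‖v‖ * ‖u‖)
      calc ‖u‖ * ‖v‖ ≤ K * (‖u‖ * ‖v‖) := le_mul_of_one_le_left (by positivity) hK
        _ = K * (‖v‖ * ‖u‖) := by ring
    | succ n =>
      obtain ⟨l, hl, h2⟩ := simIter n (τ p) (Or.inl (hD p hp))
      intro u v
      show ‖(iterBundleMap τ B n (τ p)) ((A p) u)‖ * ‖v‖ ≤
        K * (‖(iterBundleMap τ B n (τ p)) ((A p) v)‖ * ‖u‖)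
      rw [h2, h2]
      have := hdist p hp u v
      calc l * ‖(A p) u‖ * ‖v‖ = l * (‖(A p) u‖ * ‖v‖) := by ring
        _ ≤ l * (K * (‖(A p) v‖ * ‖u‖)) := by
            exact mul_le_mul_of_nonneg_left this hl.le
        _ = K * (l * ‖(A p) v‖ * ‖u‖) := by ring
end
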